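/- For a > 0, the function a ↦ ∫_0^∞ ∫_0^{a/x} e^{-x-y} dy dx is differentiable with derivative (1/2)∫_2^∞ e^{-√a s}(√a·s - 2)√(s²-4) ds, and this derivative tends to +∞ as a → 0⁺ (asymptotically like e^{-2√a}/a up to lower order terms). -/

import Mathlib

open MeasureTheory Real Filter Set Topology

lemma cube_le_exp {t : ℝ} (ht : 0 ≤ t) : t^3/27 ≤ Real.exp t := by
  have h1 : t/3 ≤ Real.exp (t/3) := by
    have := Real.add_one_le_exp (t/3); linarith
  have h2 : (t/3)^3 ≤ (Real.exp (t/3))^3 := pow_le_pow_left₀ (by positivity) h1 3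
  calc t^3/27 = (t/3)^3 := by ring
    _ ≤ (Real.exp (t/3))^3 := h2
    _ = Real.exp t := by
        rw [← Real.exp_nat_mul]; congr 1; push_cast; ring

lemma int_sq_exp {b : ℝ} (hb : 0 < b) :
    IntegrableOn (fun s => Real.exp (-(b*s)) * s^2) (Ioi 2) := by
  have hint : IntegrableOn (fun s => (216/b^3) * Real.exp (-(b/2) * s)) (Ioi 2) :=
    (exp_neg_integrableOn_Ioi 2 (half_pos hb)).const_mul _
  apply Integrable.mono hint
  · apply (Continuous.continuousOn (by continuity)).aestronglyMeasurable measurableSet_Ioi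
  · rw [ae_restrict_iff' measurableSet_Ioi]
    filter_upwards with s hs
    have hs2 : (2:ℝ) < s := hs
    have hsp : (0:ℝ) < s := by linarith
    have h1 : ((b/2)*s)^3/27 ≤ Real.exp ((b/2)*s) := cube_le_exp (by positivity)
    have hep : (0:ℝ) < Real.exp ((b/2)*s) := Real.exp_pos _
    have key : s^2 * Real.exp (-(b/2)*s) ≤ 216/b^3 := by
      have h2 : s^2*s ≤ 216/b^3 * Real.exp ((b/2)*s) := by
        have e1 : s^2*s = 216/b^3 * (((b/2)*s)^3/27) := by field_simp; ring
        rw [e1]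
        exact mul_le_mul_of_nonneg_left h1 (by positivity)
      rw [neg_mul, Real.exp_neg, mul_inv_le_iff₀ hep]
      nlinarith
    rw [Real.norm_eq_abs, Real.norm_eq_abs, abs_of_nonneg (by positivity),
      abs_of_nonneg (by positivity)]
    calc Real.exp (-(b*s)) * s^2
        = (s^2 * Real.exp (-(b/2)*s)) * Real.exp (-(b/2)*s) := by
          have he : Real.exp (-(b*s)) = Real.exp (-(b/2)*s) * Real.exp (-(b/2)*s) := by
            rw [← Real.exp_add]; congr 1; ring
          rw [he]; ring
      _ ≤ (216/b^3) * Real.exp (-(b/2)*s) :=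
          mul_le_mul_of_nonneg_right key (le_of_lt (Real.exp_pos _))

lemma sqrt_sq4_pos {s : ℝ} (hs : 2 < s) : 0 < Real.sqrt (s^2 - 4) :=
  Real.sqrt_pos.2 (by nlinarith)

lemma sqrt_sq4_le {s : ℝ} (hs : 2 < s) : Real.sqrt (s^2 - 4) ≤ s := by
  have : Real.sqrt (s^2-4) ≤ Real.sqrt (s^2) := Real.sqrt_le_sqrt (by nlinarith)
  rwa [Real.sqrt_sq (by linarith)] at this

lemma meas_exp (b : ℝ) : Measurable (fun s : ℝ => Real.exp (-(b*s))) :=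
  (measurable_id.const_mul b).neg.exp

lemma meas_sqrt4 : Measurable (fun s : ℝ => Real.sqrt (s^2 - 4)) :=
  Real.continuous_sqrt.measurable.comp ((measurable_id.pow_const 2).sub_const 4)

lemma meas_exp_div_sqrt (b : ℝ) :
    Measurable (fun s => Real.exp (-(b*s)) / Real.sqrt (s^2 - 4)) :=
  (meas_exp b).div meas_sqrt4

lemma int_exp_div_sqrt {b : ℝ} (hb : 0 < b) :
    IntegrableOn (fun s => Real.exp (-(b*s)) / Real.sqrt (s^2-4)) (Ioi 2) := by
  have hsplit : Ioc (2:ℝ) 3 ∪ Ioi (3:ℝ) = Ioi 2 := Ioc_union_Ioi_eq_Ioi (by norm_num)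
  rw [← hsplit]
  apply IntegrableOn.union
  · -- near 2 : dominate by (s-2)^(-1/2)
    have hrpow : IntervalIntegrable (fun x : ℝ => x ^ (-(1/2) : ℝ)) volume 0 1 :=
      intervalIntegral.intervalIntegrable_rpow' (by norm_num)
    have hshift : IntervalIntegrable (fun x : ℝ => (x - 2) ^ (-(1/2) : ℝ)) volume 2 3 := by
      have := hrpow.comp_sub_right 2
      norm_num at this; exact this
    have hint : IntegrableOn (fun x : ℝ => (x - 2) ^ (-(1/2) : ℝ)) (Ioc 2 3) :=
      (intervalIntegrable_iff_integrableOn_Ioc_of_le (by norm_num)).1 hshift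
    apply Integrable.mono hint ((meas_exp_div_sqrt b).aestronglyMeasurable)
    rw [ae_restrict_iff' measurableSet_Ioc]
    filter_upwards with s hs
    obtain ⟨hs2, hs3⟩ := hs
    have h1 : (0:ℝ) < s - 2 := by linarith
    have h2 : Real.sqrt (s-2) ≤ Real.sqrt (s^2-4) := Real.sqrt_le_sqrt (by nlinarith)
    have h3 : (0:ℝ) < Real.sqrt (s-2) := Real.sqrt_pos.2 h1
    rw [Real.norm_eq_abs, Real.norm_eq_abs, abs_of_nonneg (by positivity),
      abs_of_nonneg (by positivity), Real.rpow_neg h1.le, ← Real.sqrt_eq_rpow]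
    calc Real.exp (-(b*s)) / Real.sqrt (s^2-4)
        ≤ 1 / Real.sqrt (s-2) := by
          apply div_le_div₀ (by positivity) (Real.exp_le_one_iff.2 (by nlinarith)) h3 h2
      _ = (Real.sqrt (s-2))⁻¹ := one_div _
  · -- far : dominate by exp(-(b*s))
    have hint : IntegrableOn (fun s : ℝ => Real.exp (-b * s)) (Ioi 3) :=
      exp_neg_integrableOn_Ioi 3 hb
    apply Integrable.mono hint ((meas_exp_div_sqrt b).aestronglyMeasurable)
    rw [ae_restrict_iff' measurableSet_Ioi]
    filter_upwards with s hs
    have hs3 : (3:ℝ) < s := hs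
    have h1 : (1:ℝ) ≤ Real.sqrt (s^2-4) := by
      rw [show (1:ℝ) = Real.sqrt 1 by simp]
      exact Real.sqrt_le_sqrt (by nlinarith)
    rw [Real.norm_eq_abs, Real.norm_eq_abs, abs_of_nonneg (by positivity),
      abs_of_nonneg (Real.exp_pos _).le, neg_mul]
    calc Real.exp (-(b*s)) / Real.sqrt (s^2-4)
        ≤ Real.exp (-(b*s)) / 1 := by
          apply div_le_div_of_nonneg_left (Real.exp_pos _).le (by linarith) h1
      _ = Real.exp (-(b*s)) := div_one _

lemma int_exp_mul_sqrt {b : ℝ} (hb : 0 < b) :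
    IntegrableOn (fun s => Real.exp (-(b*s)) * Real.sqrt (s^2-4)) (Ioi 2) := by
  apply Integrable.mono (int_sq_exp hb)
  · exact ((meas_exp b).mul meas_sqrt4).aestronglyMeasurable
  · rw [ae_restrict_iff' measurableSet_Ioi]
    filter_upwards with s hs
    have hs2 : (2:ℝ) < s := hs
    rw [Real.norm_eq_abs, Real.norm_eq_abs, abs_of_nonneg (by positivity),
      abs_of_nonneg (by positivity)]
    have h1 := sqrt_sq4_le hs2
    calc Real.exp (-(b*s)) * Real.sqrt (s^2-4)
        ≤ Real.exp (-(b*s)) * s := mul_le_mul_of_nonneg_left h1 (Real.exp_pos _).le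
      _ ≤ Real.exp (-(b*s)) * s^2 :=
          mul_le_mul_of_nonneg_left (by nlinarith) (Real.exp_pos _).le

lemma int_exp_mul_s_sqrt {b : ℝ} (hb : 0 < b) :
    IntegrableOn (fun s => Real.exp (-(b*s)) * (s * Real.sqrt (s^2-4))) (Ioi 2) := by
  apply Integrable.mono (int_sq_exp hb)
  · exact ((meas_exp b).mul (measurable_id.mul meas_sqrt4)).aestronglyMeasurable
  · rw [ae_restrict_iff' measurableSet_Ioi]
    filter_upwards with s hs
    have hs2 : (2:ℝ) < s := hs
    rw [Real.norm_eq_abs, Real.norm_eq_abs, abs_of_nonneg (by positivity),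
      abs_of_nonneg (by positivity)]
    have h1 := sqrt_sq4_le hs2
    have h2 : (0:ℝ) < s := by linarith
    calc Real.exp (-(b*s)) * (s * Real.sqrt (s^2-4))
        ≤ Real.exp (-(b*s)) * (s * s) :=
          mul_le_mul_of_nonneg_left (mul_le_mul_of_nonneg_left h1 h2.le) (Real.exp_pos _).le
      _ = Real.exp (-(b*s)) * s^2 := by ring

-- derivative of sqrt(s^2-4)
lemma hasDerivAt_sqrt4 {s : ℝ} (hs : 2 < s) :
    HasDerivAt (fun s : ℝ => Real.sqrt (s^2-4)) (s / Real.sqrt (s^2-4)) s := by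
  have hne : s^2 - 4 ≠ 0 := by nlinarith
  have hinner : HasDerivAt (fun s : ℝ => s^2 - 4) (2*s) s := by
    simpa using (hasDerivAt_pow 2 s).sub_const 4
  have := hinner.sqrt hne
  convert this using 1
  have h0 : Real.sqrt (s^2-4) ≠ 0 := (sqrt_sq4_pos hs).ne'
  field_simp

lemma hasDerivAt_exp_neg (b s : ℝ) :
    HasDerivAt (fun s : ℝ => Real.exp (-(b*s))) (-b * Real.exp (-(b*s))) s := by
  have hinner : HasDerivAt (fun s : ℝ => -(b*s)) (-b) s := by
    exact (((hasDerivAt_id s).const_mul b).neg).congr_deriv (by ring)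
  simpa [mul_comm] using hinner.exp

lemma psi_hasDeriv {b s : ℝ} (hs : 2 < s) :
    HasDerivAt (fun s : ℝ => -(1/2) * (Real.exp (-(b*s)) * (s * Real.sqrt (s^2-4))))
      ((b/2) * (Real.exp (-(b*s)) * (s * Real.sqrt (s^2-4)))
        - Real.exp (-(b*s)) * Real.sqrt (s^2-4)
        - 2 * (Real.exp (-(b*s)) / Real.sqrt (s^2-4))) s := by
  have hv : HasDerivAt (fun s : ℝ => s * Real.sqrt (s^2-4))
      (1 * Real.sqrt (s^2-4) + s * (s / Real.sqrt (s^2-4))) s :=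
    (hasDerivAt_id s).mul (hasDerivAt_sqrt4 hs)
  have h := ((hasDerivAt_exp_neg b s).mul hv).const_mul (-(1/2) : ℝ)
  refine h.congr_deriv ?_
  have hr : (0:ℝ) < Real.sqrt (s^2-4) := sqrt_sq4_pos hs
  have hr2 : (Real.sqrt (s^2-4))^2 = s^2-4 := Real.sq_sqrt (by nlinarith)
  field_simp
  ring_nf
  ring_nf at hr2
  nlinarith [hr2, Real.exp_pos (-(b*s))]

lemma psi_tendsto {b : ℝ} (hb : 0 < b) :
    Tendsto (fun s : ℝ => -(1/2) * (Real.exp (-(b*s)) * (s * Real.sqrt (s^2-4))))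
      atTop (𝓝 0) := by
  have h0 : Tendsto (fun s : ℝ => (1/(2*b^2)) * ((b*s)^2 * Real.exp (-(b*s)))) atTop (𝓝 0) := by
    have h1 : Tendsto (fun s : ℝ => b * s) atTop atTop :=
      Tendsto.const_mul_atTop hb tendsto_id
    have h2 := (tendsto_pow_mul_exp_neg_atTop_nhds_zero 2).comp h1
    have h3 := h2.const_mul (1/(2*b^2))
    rw [mul_zero] at h3
    exact h3
  apply squeeze_zero_norm' _ h0
  filter_upwards [Filter.eventually_ge_atTop (2:ℝ)] with s hs
  have hs0 : (0:ℝ) < s := by linarith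
  have h1 : Real.sqrt (s^2-4) ≤ s := by
    have : Real.sqrt (s^2-4) ≤ Real.sqrt (s^2) := Real.sqrt_le_sqrt (by nlinarith)
    rwa [Real.sqrt_sq hs0.le] at this
  have heq : (1/(2*b^2)) * ((b*s)^2 * Real.exp (-(b*s)))
      = (1/2) * (s^2 * Real.exp (-(b*s))) := by field_simp
  have hnn : (0:ℝ) ≤ Real.exp (-(b*s)) * (s * Real.sqrt (s^2-4)) := by positivity
  rw [heq, Real.norm_eq_abs, abs_mul, abs_of_nonneg hnn]
  have h2 : Real.exp (-(b*s)) * (s * Real.sqrt (s^2-4)) ≤ s^2 * Real.exp (-(b*s)) := by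
    calc Real.exp (-(b*s)) * (s * Real.sqrt (s^2-4))
        = (s * Real.sqrt (s^2-4)) * Real.exp (-(b*s)) := by ring
      _ ≤ (s * s) * Real.exp (-(b*s)) :=
          mul_le_mul_of_nonneg_right (mul_le_mul_of_nonneg_left h1 hs0.le) (Real.exp_pos _).le
      _ = s^2 * Real.exp (-(b*s)) := by ring
  have h3 : |(-(1/2):ℝ)| = 1/2 := by norm_num
  rw [h3]
  nlinarith [Real.exp_pos (-(b*s))]

lemma ibp {b : ℝ} (hb : 0 < b) :
    ∫ s in Ioi (2:ℝ), Real.exp (-(b*s)) * (b*s - 2) * Real.sqrt (s^2-4)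
      = 4 * ∫ s in Ioi (2:ℝ), Real.exp (-(b*s)) / Real.sqrt (s^2-4) := by
  set ψ' : ℝ → ℝ := fun s => (b/2) * (Real.exp (-(b*s)) * (s * Real.sqrt (s^2-4)))
      - Real.exp (-(b*s)) * Real.sqrt (s^2-4)
      - 2 * (Real.exp (-(b*s)) / Real.sqrt (s^2-4)) with hψ'
  have hψ'int : IntegrableOn ψ' (Ioi 2) :=
    (((int_exp_mul_s_sqrt hb).const_mul (b/2)).sub (int_exp_mul_sqrt hb)).sub
      ((int_exp_div_sqrt hb).const_mul 2)
  have hFTC : ∫ s in Ioi (2:ℝ), ψ' s = 0 := by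
    have h := integral_Ioi_of_hasDerivAt_of_tendsto
      (f := fun s : ℝ => -(1/2) * (Real.exp (-(b*s)) * (s * Real.sqrt (s^2-4))))
      (f' := ψ') (a := 2) (m := 0)
      ?_ (fun x hx => psi_hasDeriv hx) hψ'int (psi_tendsto hb)
    · rw [h]
      norm_num [show (2:ℝ)^2 - 4 = 0 by norm_num]
    · apply Continuous.continuousWithinAt
      continuity
  have hcongr : ∫ s in Ioi (2:ℝ), Real.exp (-(b*s)) * (b*s - 2) * Real.sqrt (s^2-4)
      = ∫ s in Ioi (2:ℝ), (2 * ψ' s + 4 * (Real.exp (-(b*s)) / Real.sqrt (s^2-4))) := by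
    apply setIntegral_congr_fun measurableSet_Ioi
    intro s hs
    simp only [hψ']
    ring
  rw [hcongr, integral_add (hψ'int.const_mul 2) ((int_exp_div_sqrt hb).const_mul 4),
    integral_const_mul, integral_const_mul, hFTC, mul_zero, zero_add]

section CV
variable {b : ℝ}

lemma branch_sum {s : ℝ} (hb : 0 < b) (hs : 2 < s) :
    ((b/2)*(s + Real.sqrt (s^2-4))) + b^2/((b/2)*(s + Real.sqrt (s^2-4))) = b*s ∧
    ((b/2)*(s - Real.sqrt (s^2-4))) + b^2/((b/2)*(s - Real.sqrt (s^2-4))) = b*s := by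
  have hr2 : (Real.sqrt (s^2-4))^2 = s^2-4 := Real.sq_sqrt (by nlinarith)
  have hrs : Real.sqrt (s^2-4) < s := by
    nlinarith [Real.sqrt_nonneg (s^2-4), hr2]
  have hr0 : (0:ℝ) ≤ Real.sqrt (s^2-4) := Real.sqrt_nonneg _
  have hxp : (0:ℝ) < (b/2)*(s + Real.sqrt (s^2-4)) := by nlinarith
  have hxm : (0:ℝ) < (b/2)*(s - Real.sqrt (s^2-4)) := by nlinarith
  constructor
  · have hx2 : ((b/2)*(s + Real.sqrt (s^2-4)))^2 + b^2
        = b*s*((b/2)*(s + Real.sqrt (s^2-4))) := by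
      linear_combination (b^2/4) * hr2
    have hd : b^2/((b/2)*(s + Real.sqrt (s^2-4))) = b*s - (b/2)*(s + Real.sqrt (s^2-4)) := by
      rw [div_eq_iff hxp.ne']
      linear_combination hx2
    rw [hd]; ring
  · have hx2 : ((b/2)*(s - Real.sqrt (s^2-4)))^2 + b^2
        = b*s*((b/2)*(s - Real.sqrt (s^2-4))) := by
      linear_combination (b^2/4) * hr2
    have hd : b^2/((b/2)*(s - Real.sqrt (s^2-4))) = b*s - (b/2)*(s - Real.sqrt (s^2-4)) := by
      rw [div_eq_iff hxm.ne']
      linear_combination hx2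
    rw [hd]; ring

lemma fp_facts (hb : 0 < b) {s : ℝ} (hs : s ∈ Ioi (2:ℝ)) :
    0 < (b/2)*(s + Real.sqrt (s^2-4)) ∧
    ((b/2)*(s + Real.sqrt (s^2-4))) + b^2/((b/2)*(s + Real.sqrt (s^2-4))) = b*s := by
  have hs' : 2 < s := hs
  refine ⟨?_, (branch_sum hb hs').1⟩
  have := Real.sqrt_nonneg (s^2-4); nlinarith

lemma fm_facts (hb : 0 < b) {s : ℝ} (hs : s ∈ Ioi (2:ℝ)) :
    0 < (b/2)*(s - Real.sqrt (s^2-4)) ∧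
    ((b/2)*(s - Real.sqrt (s^2-4))) + b^2/((b/2)*(s - Real.sqrt (s^2-4))) = b*s := by
  have hs' : 2 < s := hs
  refine ⟨?_, (branch_sum hb hs').2⟩
  have hr2 : (Real.sqrt (s^2-4))^2 = s^2-4 := Real.sq_sqrt (by nlinarith)
  have hrs : Real.sqrt (s^2-4) < s := by nlinarith [Real.sqrt_nonneg (s^2-4)]
  nlinarith

lemma fp_inj (hb : 0 < b) : InjOn (fun s => (b/2)*(s + Real.sqrt (s^2-4))) (Ioi (2:ℝ)) := by
  intro s1 h1 s2 h2 heq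
  have e1 := (fp_facts hb h1).2
  have e2 := (fp_facts hb h2).2
  simp only at heq
  rw [heq] at e1
  have : b * s1 = b * s2 := e1.symm.trans e2
  exact mul_left_cancel₀ hb.ne' this

lemma fm_inj (hb : 0 < b) : InjOn (fun s => (b/2)*(s - Real.sqrt (s^2-4))) (Ioi (2:ℝ)) := by
  intro s1 h1 s2 h2 heq
  have e1 := (fm_facts hb h1).2
  have e2 := (fm_facts hb h2).2
  simp only at heq
  rw [heq] at e1
  have : b * s1 = b * s2 := e1.symm.trans e2
  exact mul_left_cancel₀ hb.ne' this

lemma fp_image (hb : 0 < b) :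
    (fun s => (b/2)*(s + Real.sqrt (s^2-4))) '' Ioi (2:ℝ) = Ioi b := by
  ext x
  constructor
  · rintro ⟨s, hs, rfl⟩
    have hs' : 2 < s := hs
    have hr2 : (Real.sqrt (s^2-4))^2 = s^2-4 := Real.sq_sqrt (by nlinarith)
    have hr0 : (0:ℝ) < Real.sqrt (s^2-4) := sqrt_sq4_pos hs'
    show b < (b/2)*(s + Real.sqrt (s^2-4))
    nlinarith
  · intro hx
    have hx' : b < x := hx
    have hx0 : (0:ℝ) < x := lt_trans hb hx'
    refine ⟨(x + b^2/x)/b, ?_, ?_⟩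
    · show (2:ℝ) < (x + b^2/x)/b
      rw [lt_div_iff₀ hb]
      have heq : x + b^2/x = (x*x + b^2)/x := by field_simp; try ring
      rw [heq, lt_div_iff₀ hx0]
      nlinarith
    · have hsq : ((x + b^2/x)/b)^2 - 4 = ((x - b^2/x)/b)^2 := by
        field_simp; try ring
      have hpos : (0:ℝ) < (x - b^2/x)/b := by
        apply div_pos _ hb
        have : b^2/x < x := by rw [div_lt_iff₀ hx0]; nlinarith
        linarith
      simp only
      rw [hsq, Real.sqrt_sq hpos.le]
      field_simp
      try ring

lemma fm_image (hb : 0 < b) :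
    (fun s => (b/2)*(s - Real.sqrt (s^2-4))) '' Ioi (2:ℝ) = Ioo 0 b := by
  ext x
  constructor
  · rintro ⟨s, hs, rfl⟩
    have hs' : 2 < s := hs
    have hr2 : (Real.sqrt (s^2-4))^2 = s^2-4 := Real.sq_sqrt (by nlinarith)
    have hr0 : (0:ℝ) < Real.sqrt (s^2-4) := sqrt_sq4_pos hs'
    have hrs : Real.sqrt (s^2-4) < s := by nlinarith
    constructor
    · show (0:ℝ) < (b/2)*(s - Real.sqrt (s^2-4)); nlinarith
    · show (b/2)*(s - Real.sqrt (s^2-4)) < b; nlinarith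
  · rintro ⟨hx0, hxb⟩
    refine ⟨(x + b^2/x)/b, ?_, ?_⟩
    · show (2:ℝ) < (x + b^2/x)/b
      rw [lt_div_iff₀ hb]
      have heq : x + b^2/x = (x*x + b^2)/x := by field_simp; try ring
      rw [heq, lt_div_iff₀ hx0]
      nlinarith
    · have hsq : ((x + b^2/x)/b)^2 - 4 = ((b^2/x - x)/b)^2 := by
        field_simp; try ring
      have hpos : (0:ℝ) < (b^2/x - x)/b := by
        apply div_pos _ hb
        have : x < b^2/x := by rw [lt_div_iff₀ hx0]; nlinarith
        linarith
      simp only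
      rw [hsq, Real.sqrt_sq hpos.le]
      field_simp
      try ring

end CV

lemma fp_hasDeriv {b : ℝ} {s : ℝ} (hs : s ∈ Ioi (2:ℝ)) :
    HasDerivWithinAt (fun s => (b/2)*(s + Real.sqrt (s^2-4)))
      ((b/2)*(1 + s/Real.sqrt (s^2-4))) (Ioi 2) s :=
  (((hasDerivAt_id s).add (hasDerivAt_sqrt4 hs)).const_mul (b/2)).hasDerivWithinAt

lemma fm_hasDeriv {b : ℝ} {s : ℝ} (hs : s ∈ Ioi (2:ℝ)) :
    HasDerivWithinAt (fun s => (b/2)*(s - Real.sqrt (s^2-4)))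
      ((b/2)*(1 - s/Real.sqrt (s^2-4))) (Ioi 2) s :=
  (((hasDerivAt_id s).sub (hasDerivAt_sqrt4 hs)).const_mul (b/2)).hasDerivWithinAt

lemma cv {b : ℝ} (hb : 0 < b)
    (hint : IntegrableOn (fun x => x⁻¹ * Real.exp (-x - b^2/x)) (Ioi 0)) :
    ∫ x in Ioi (0:ℝ), x⁻¹ * Real.exp (-x - b^2/x)
      = 2 * ∫ s in Ioi (2:ℝ), Real.exp (-(b*s)) / Real.sqrt (s^2-4) := by
  set g : ℝ → ℝ := fun x => x⁻¹ * Real.exp (-x - b^2/x) with hg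
  -- plus branch
  have hIp : ∫ x in Ioi b, g x = ∫ s in Ioi (2:ℝ), Real.exp (-(b*s)) / Real.sqrt (s^2-4) := by
    rw [← fp_image hb,
      integral_image_eq_integral_abs_deriv_smul measurableSet_Ioi
        (fun s hs => fp_hasDeriv hs) (fp_inj hb) g]
    apply setIntegral_congr_fun measurableSet_Ioi
    intro s hs
    have hs' : 2 < s := hs
    have hr : (0:ℝ) < Real.sqrt (s^2-4) := sqrt_sq4_pos hs'
    obtain ⟨hxp, hsum⟩ := fp_facts hb hs
    have harg : -((b/2)*(s + Real.sqrt (s^2-4))) - b^2/((b/2)*(s + Real.sqrt (s^2-4)))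
        = -(b*s) := by linarith
    have hd : (0:ℝ) < (b/2)*(1 + s/Real.sqrt (s^2-4)) := by
      have : (0:ℝ) < s/Real.sqrt (s^2-4) := div_pos (by linarith) hr
      nlinarith
    simp only [hg, smul_eq_mul, harg, abs_of_pos hd]
    rw [eq_comm]
    field_simp
    ring
  -- minus branch
  have hIm : ∫ x in Ioo 0 b, g x = ∫ s in Ioi (2:ℝ), Real.exp (-(b*s)) / Real.sqrt (s^2-4) := by
    rw [← fm_image hb,
      integral_image_eq_integral_abs_deriv_smul measurableSet_Ioi
        (fun s hs => fm_hasDeriv hs) (fm_inj hb) g]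
    apply setIntegral_congr_fun measurableSet_Ioi
    intro s hs
    have hs' : 2 < s := hs
    have hr : (0:ℝ) < Real.sqrt (s^2-4) := sqrt_sq4_pos hs'
    have hr2 : (Real.sqrt (s^2-4))^2 = s^2-4 := Real.sq_sqrt (by nlinarith)
    have hrs : Real.sqrt (s^2-4) < s := by nlinarith
    obtain ⟨hxm, hsum⟩ := fm_facts hb hs
    have harg : -((b/2)*(s - Real.sqrt (s^2-4))) - b^2/((b/2)*(s - Real.sqrt (s^2-4)))
        = -(b*s) := by linarith
    have hd : (b/2)*(1 - s/Real.sqrt (s^2-4)) < 0 := by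
      have h1 : (1:ℝ) < s/Real.sqrt (s^2-4) := (one_lt_div hr).2 hrs
      nlinarith
    simp only [hg, smul_eq_mul, harg, abs_of_neg hd]
    have h1 : -((b/2)*(1 - s/Real.sqrt (s^2-4)))
        = ((b/2)*(s - Real.sqrt (s^2-4)))/Real.sqrt (s^2-4) := by
      field_simp
      ring
    rw [h1, div_mul_eq_mul_div, ← mul_assoc, mul_inv_cancel₀ hxm.ne', one_mul]
  -- split the domain
  have hsplit : ∫ x in Ioi (0:ℝ), g x = (∫ x in Ioc 0 b, g x) + ∫ x in Ioi b, g x := by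
    have h := setIntegral_union (μ := volume) (f := g) (Ioc_disjoint_Ioi (le_refl b))
      measurableSet_Ioi (hint.mono_set Ioc_subset_Ioi_self)
      (hint.mono_set (Ioi_subset_Ioi hb.le))
    rw [Ioc_union_Ioi_eq_Ioi hb.le] at h
    exact h
  calc ∫ x in Ioi (0:ℝ), g x = (∫ x in Ioc 0 b, g x) + ∫ x in Ioi b, g x := hsplit
    _ = (∫ x in Ioo 0 b, g x) + ∫ x in Ioi b, g x := by rw [integral_Ioc_eq_integral_Ioo]
    _ = 2 * ∫ s in Ioi (2:ℝ), Real.exp (-(b*s)) / Real.sqrt (s^2-4) := by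
        linarith [hIp, hIm]

open intervalIntegral in
lemma my_integral_inv {a b : ℝ} (h : (0:ℝ) ∉ Set.uIcc a b) :
    ∫ x in a..b, x⁻¹ = Real.log (b/a) := integral_inv h

lemma inner_integral {x c : ℝ} (hc : 0 ≤ c) :
    ∫ y in Ioo (0:ℝ) c, Real.exp (-x - y) = Real.exp (-x) - Real.exp (-x - c) := by
  rw [← integral_Ioc_eq_integral_Ioo, ← intervalIntegral.integral_of_le hc]
  have h1 : ∀ y : ℝ, Real.exp (-x - y) = Real.exp (-x) * Real.exp (-y) := fun y => by
    rw [← Real.exp_add]; ring_nf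
  simp_rw [h1]
  rw [intervalIntegral.integral_const_mul]
  have h2 : (∫ y in (0:ℝ)..c, Real.exp (-y)) = Real.exp 0 - Real.exp (-c) := by
    have h3 := intervalIntegral.integral_comp_neg (a := (0:ℝ)) (b := c) (fun y => Real.exp y)
    rw [h3, integral_exp, neg_zero]
  rw [h2, Real.exp_zero, mul_sub, mul_one, ← Real.exp_add]
  try ring_nf

lemma deriv_lemma {a : ℝ} (ha : 0 < a) :
    IntegrableOn (fun x => x⁻¹ * Real.exp (-x - a/x)) (Ioi 0) ∧
    HasDerivAt (fun a : ℝ => ∫ x in Ioi (0:ℝ), (Real.exp (-x) - Real.exp (-x - a/x)))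
      (∫ x in Ioi (0:ℝ), x⁻¹ * Real.exp (-x - a/x)) a := by
  have hmeas : ∀ a' : ℝ, AEStronglyMeasurable (fun x : ℝ => Real.exp (-x) - Real.exp (-x - a'/x))
      (volume.restrict (Ioi 0)) := by
    intro a'
    apply Measurable.aestronglyMeasurable
    exact (measurable_neg.exp).sub
      ((measurable_neg.sub (measurable_inv.const_mul a')).exp)
  have hmeas' : AEStronglyMeasurable (fun x : ℝ => x⁻¹ * Real.exp (-x - a/x))
      (volume.restrict (Ioi 0)) := by
    apply Measurable.aestronglyMeasurable
    exact measurable_inv.mul ((measurable_neg.sub (measurable_inv.const_mul a)).exp)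
  have hexp_int : Integrable (fun x : ℝ => Real.exp (-x)) (volume.restrict (Ioi 0)) := by
    have := exp_neg_integrableOn_Ioi 0 (one_pos (α := ℝ))
    simp at this; exact this
  have h := hasDerivAt_integral_of_dominated_loc_of_deriv_le (μ := volume.restrict (Ioi 0))
    (F := fun a x => Real.exp (-x) - Real.exp (-x - a/x))
    (F' := fun a x => x⁻¹ * Real.exp (-x - a/x))
    (x₀ := a) (bound := fun x => (2/a) * Real.exp (-x)) (Metric.ball_mem_nhds a (half_pos ha))
    (Filter.Eventually.of_forall hmeas) ?_ hmeas' ?_ (hexp_int.const_mul _) ?_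
  · exact ⟨h.1, h.2⟩
  · -- integrability of F a
    apply Integrable.mono hexp_int (hmeas a)
    rw [ae_restrict_iff' measurableSet_Ioi]
    filter_upwards with x hx
    have hx0 : (0:ℝ) < x := hx
    have h1 : Real.exp (-x - a/x) ≤ Real.exp (-x) :=
      Real.exp_le_exp.2 (by nlinarith [div_nonneg ha.le hx0.le])
    have h2 : (0:ℝ) < Real.exp (-x - a/x) := Real.exp_pos _
    rw [Real.norm_eq_abs, Real.norm_eq_abs, abs_of_nonneg (by linarith),
      abs_of_nonneg (Real.exp_pos _).le]
    linarith
  · -- bound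
    rw [ae_restrict_iff' measurableSet_Ioi]
    filter_upwards with x hx
    intro a' ha'
    have hx0 : (0:ℝ) < x := hx
    rw [Metric.mem_ball, Real.dist_eq] at ha'
    have ha2 : a/2 < a' := by cases abs_lt.1 ha' with | intro h1 h2 => linarith
    have hkey : Real.exp (-(a/2)/x) ≤ 2*x/a := by
      have ht : (0:ℝ) < (a/2)/x := div_pos (half_pos ha) hx0
      have := Real.add_one_le_exp ((a/2)/x)
      have h2 : (a/2)/x ≤ Real.exp ((a/2)/x) := by linarith
      rw [neg_div, Real.exp_neg]
      rw [inv_le_comm₀ (Real.exp_pos _) (by positivity)]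
      calc (2*x/a)⁻¹ = (a/2)/x := by field_simp; try ring
        _ ≤ Real.exp ((a/2)/x) := h2
    have hsplit : Real.exp (-x - a'/x) = Real.exp (-x) * Real.exp (-(a'/x)) := by
      rw [← Real.exp_add]; ring_nf
    have hmon : Real.exp (-(a'/x)) ≤ Real.exp (-(a/2)/x) := by
      apply Real.exp_le_exp.2
      rw [neg_div]
      apply neg_le_neg
      have h25 : a/2 ≤ a' := ha2.le
      gcongr
    have hb1 : x⁻¹ * Real.exp (-(a'/x)) ≤ 2/a := by
      calc x⁻¹ * Real.exp (-(a'/x))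
          ≤ x⁻¹ * Real.exp (-(a/2)/x) :=
            mul_le_mul_of_nonneg_left hmon (by positivity)
        _ ≤ x⁻¹ * (2*x/a) := mul_le_mul_of_nonneg_left hkey (by positivity)
        _ = 2/a := by field_simp
    rw [Real.norm_eq_abs, abs_of_nonneg (by positivity)]
    calc x⁻¹ * Real.exp (-x - a'/x)
        = (x⁻¹ * Real.exp (-(a'/x))) * Real.exp (-x) := by rw [hsplit]; ring
      _ ≤ (2/a) * Real.exp (-x) := mul_le_mul_of_nonneg_right hb1 (Real.exp_pos _).le
  · -- differentiability
    rw [ae_restrict_iff' measurableSet_Ioi]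
    filter_upwards with x hx
    intro a' _
    have hx0 : (0:ℝ) < x := hx
    have hinner : HasDerivAt (fun a' : ℝ => -x - a'/x) (-(1/x)) a' := by
      have h1 : HasDerivAt (fun a' : ℝ => a'/x) (1/x) a' := by
        simpa using (hasDerivAt_id a').div_const x
      simpa using h1.const_sub (-x)
    have h2 := (hinner.exp).const_sub (Real.exp (-x))
    convert h2 using 1
    ring

theorem deriv_area_cdf_tendsto_atTop :
    (∀ a : ℝ, 0 < a →
      HasDerivAt (fun a : ℝ => ∫ x in Set.Ioi (0:ℝ), ∫ y in Set.Ioo 0 (a/x), Real.exp (-x - y))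
        ((1/2) * ∫ s in Set.Ioi (2:ℝ),
          Real.exp (-(Real.sqrt a * s)) * (Real.sqrt a * s - 2) * Real.sqrt (s^2 - 4)) a) ∧
    Tendsto (fun a : ℝ =>
        (1/2) * ∫ s in Set.Ioi (2:ℝ),
          Real.exp (-(Real.sqrt a * s)) * (Real.sqrt a * s - 2) * Real.sqrt (s^2 - 4))
      (nhdsWithin 0 (Set.Ioi 0)) atTop := by
  constructor
  · intro a ha
    have hb : 0 < Real.sqrt a := Real.sqrt_pos.2 ha
    have hba : Real.sqrt a ^ 2 = a := Real.sq_sqrt ha.le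
    obtain ⟨hint, hd⟩ := deriv_lemma ha
    have hint' : IntegrableOn (fun x => x⁻¹ * Real.exp (-x - (Real.sqrt a)^2/x)) (Ioi 0) := by
      rw [hba]; exact hint
    have h1 := cv hb hint'
    rw [hba] at h1
    have h2 := ibp hb
    have hval : (1/2) * (∫ s in Ioi (2:ℝ),
          Real.exp (-(Real.sqrt a * s)) * (Real.sqrt a * s - 2) * Real.sqrt (s^2 - 4))
        = ∫ x in Ioi (0:ℝ), x⁻¹ * Real.exp (-x - a/x) := by
      rw [h2, h1]; ring
    rw [← hval] at hd
    apply hd.congr_of_eventuallyEq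
    filter_upwards [isOpen_Ioi.mem_nhds ha] with a' ha'
    apply setIntegral_congr_fun measurableSet_Ioi
    intro x hx
    exact inner_integral (div_nonneg (le_of_lt ha') (le_of_lt hx))
  · rw [tendsto_atTop]
    intro C
    set M := 3 * Real.exp (|C| + 1) with hMdef
    have hexp1 : (1:ℝ) ≤ Real.exp (|C| + 1) := Real.one_le_exp (by positivity)
    have hM3 : (3:ℝ) ≤ M := by rw [hMdef]; nlinarith
    have hM0 : (0:ℝ) < M := by linarith
    have hδ0 : (0:ℝ) < (1/(2*M))^2 := by positivity
    filter_upwards [Ioo_mem_nhdsGT_of_mem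
      (⟨le_refl (0:ℝ), hδ0⟩ : (0:ℝ) ∈ Ico (0:ℝ) ((1/(2*M))^2))] with a haa
    obtain ⟨ha0, haM⟩ := haa
    have hb : 0 < Real.sqrt a := Real.sqrt_pos.2 ha0
    have hsa : Real.sqrt a < 1/(2*M) := by
      rw [show (1/(2*M)) = Real.sqrt ((1/(2*M))^2) from (Real.sqrt_sq (by positivity)).symm]
      exact Real.sqrt_lt_sqrt ha0.le haM
    have hsaM : Real.sqrt a * M ≤ 1/2 := by
      calc Real.sqrt a * M ≤ (1/(2*M)) * M := mul_le_mul_of_nonneg_right hsa.le hM0.le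
        _ = 1/2 := by field_simp; try ring
    have h2 := ibp hb
    have hGeq : (1/2) * (∫ s in Ioi (2:ℝ),
          Real.exp (-(Real.sqrt a * s)) * (Real.sqrt a * s - 2) * Real.sqrt (s^2 - 4))
        = 2 * ∫ s in Ioi (2:ℝ), Real.exp (-(Real.sqrt a * s)) / Real.sqrt (s^2-4) := by
      rw [h2]; ring
    rw [hGeq]
    have hint := int_exp_div_sqrt hb
    have hsub : Ioc (3:ℝ) M ⊆ Ioi (2:ℝ) := fun y hy => lt_trans (by norm_num) hy.1
    have hmono1 : (∫ s in Ioc (3:ℝ) M, Real.exp (-(Real.sqrt a * s)) / Real.sqrt (s^2-4))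
        ≤ ∫ s in Ioi (2:ℝ), Real.exp (-(Real.sqrt a * s)) / Real.sqrt (s^2-4) := by
      apply setIntegral_mono_set hint
      · filter_upwards with s using div_nonneg (Real.exp_pos _).le (Real.sqrt_nonneg _)
      · exact HasSubset.Subset.eventuallyLE hsub
    have hcont : ContinuousOn (fun s : ℝ => (1/2) * s⁻¹) (Icc (3:ℝ) M) := by
      apply ContinuousOn.mul continuousOn_const
      apply ContinuousOn.inv₀ continuousOn_id
      intro y hy
      have h0y : (0:ℝ) < y := by linarith [hy.1]
      simpa using h0y.ne'
    have hint2 : IntegrableOn (fun s : ℝ => (1/2) * s⁻¹) (Ioc 3 M) :=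
      (hcont.integrableOn_compact isCompact_Icc).mono_set Ioc_subset_Icc_self
    have hmono2 : (∫ s in Ioc (3:ℝ) M, (1/2) * s⁻¹)
        ≤ ∫ s in Ioc (3:ℝ) M, Real.exp (-(Real.sqrt a * s)) / Real.sqrt (s^2-4) := by
      apply setIntegral_mono_on hint2 (hint.mono_set hsub) measurableSet_Ioc
      intro s hs
      obtain ⟨hs3, hsM⟩ := hs
      have hs2 : (2:ℝ) < s := by linarith
      have hr : 0 < Real.sqrt (s^2-4) := sqrt_sq4_pos hs2
      have hrs : Real.sqrt (s^2-4) ≤ s := sqrt_sq4_le hs2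
      have hE : (1/2 : ℝ) ≤ Real.exp (-(Real.sqrt a * s)) := by
        have h1 := Real.add_one_le_exp (-(Real.sqrt a * s))
        have h3 : Real.sqrt a * s ≤ 1/2 := by
          calc Real.sqrt a * s ≤ Real.sqrt a * M := mul_le_mul_of_nonneg_left hsM hb.le
            _ ≤ 1/2 := hsaM
        linarith
      calc (1/2 : ℝ) * s⁻¹ = (1/2) / s := by ring
        _ ≤ Real.exp (-(Real.sqrt a * s)) / Real.sqrt (s^2-4) :=
          div_le_div₀ (Real.exp_pos _).le hE hr hrs
    have hval2 : (∫ s in Ioc (3:ℝ) M, (1/2 : ℝ) * s⁻¹) = (1/2) * (|C| + 1) := by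
      have h0m : (0:ℝ) ∉ Set.uIcc (3:ℝ) M := by
        rw [Set.uIcc_of_le hM3]
        rintro ⟨h, -⟩
        linarith
      have hinv : (∫ x in (3:ℝ)..M, x⁻¹) = Real.log (M/3) :=
        my_integral_inv h0m
      rw [← intervalIntegral.integral_of_le hM3, intervalIntegral.integral_const_mul, hinv]
      have hM3' : M / 3 = Real.exp (|C| + 1) := by rw [hMdef]; ring
      rw [hM3', Real.log_exp]
    have hfinal : C ≤ |C| + 1 := le_trans (le_abs_self C) (by linarith)
    linarith [hmono1, hmono2, hval2]
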